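/- If X ⊂ ℂ^N is compact and the uniform algebra P(X) (closure of polynomials in C(X)) has a dense set of invertible elements, then the polynomial hull of X equals the rational hull of X. -/

import Mathlib

open MvPolynomial

/-- The polynomial hull of a set `X ⊆ ℂ^N`. -/
def polyHull (N : ℕ) (X : Set (Fin N → ℂ)) : Set (Fin N → ℂ) :=
  {z | ∀ p : MvPolynomial (Fin N) ℂ,
    ‖eval z p‖ ≤ sSup ((fun x => ‖eval x p‖) '' X)}

/-- The rational hull of a set `X ⊆ ℂ^N`:
`{z | every polynomial vanishing at z has a zero on X}`. -/
def ratHull (N : ℕ) (X : Set (Fin N → ℂ)) : Set (Fin N → ℂ) :=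
  {z | ∀ p : MvPolynomial (Fin N) ℂ, eval z p = 0 → ∃ x ∈ X, eval x p = 0}

/-- `P(X)`: the uniform closure in `C(X, ℂ)` of the polynomial functions. -/
def Pcl (N : ℕ) (X : Set (Fin N → ℂ)) : Set C(X, ℂ) :=
  closure (Set.range fun p : MvPolynomial (Fin N) ℂ =>
    (⟨fun x => eval (x : Fin N → ℂ) p,
      (MvPolynomial.continuous_eval (p := p)).comp continuous_subtype_val⟩ : C(X, ℂ)))

/-- Auxiliary: the polynomial function as a continuous map. -/
noncomputable def polyCM (N : ℕ) (X : Set (Fin N → ℂ)) (p : MvPolynomial (Fin N) ℂ) : C(X, ℂ) :=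
  ⟨fun x => eval (x : Fin N → ℂ) p,
    (MvPolynomial.continuous_eval (p := p)).comp continuous_subtype_val⟩

lemma Pcl_eq (N : ℕ) (X : Set (Fin N → ℂ)) :
    Pcl N X = closure (Set.range (polyCM N X)) := rfl

/-- If `X ⊆ ℂ^N` is compact and `P(X)` has a dense set of invertible elements
(every element of `P(X)` is uniformly approximable by invertible elements of `P(X)`),
then the polynomial hull of `X` equals the rational hull of `X`. -/
theorem stmt11 (N : ℕ) (X : Set (Fin N → ℂ)) (hX : IsCompact X)
    (hdense : ∀ f ∈ Pcl N X, ∀ ε > (0 : ℝ), ∃ g ∈ Pcl N X,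
      (∃ h ∈ Pcl N X, g * h = 1) ∧ ∀ x : X, ‖f x - g x‖ < ε) :
    polyHull N X = ratHull N X := by
  ext z
  simp only [polyHull, ratHull, Set.mem_setOf_eq]
  constructor
  · -- hard direction
    intro hz p hpz
    by_contra hcon
    push_neg at hcon
    have hne : X.Nonempty := by
      rcases X.eq_empty_or_nonempty with hE | hne
      · exfalso
        have h1 := hz 1
        rw [hE] at h1
        simp [Real.sSup_empty] at h1
        linarith
      · exact hne
    haveI : CompactSpace X := isCompact_iff_compactSpace.mp hX
    have hle : ∀ (q : MvPolynomial (Fin N) ℂ) (b : ℝ),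
        (∀ x : X, ‖eval (x : Fin N → ℂ) q‖ ≤ b) → ‖eval z q‖ ≤ b := by
      intro q b hb
      refine (hz q).trans (csSup_le (hne.image _) ?_)
      rintro y ⟨x, hx, rfl⟩
      exact hb ⟨x, hx⟩
    have hFP : polyCM N X p ∈ Pcl N X := by
      rw [Pcl_eq]; exact subset_closure ⟨p, rfl⟩
    obtain ⟨x₀, hx₀, hmin'⟩ := hX.exists_isMinOn hne
      ((MvPolynomial.continuous_eval (p := p)).norm.continuousOn)
    set δ : ℝ := ‖eval x₀ p‖ with hδdef
    have hmin : ∀ x : X, δ ≤ ‖eval (x : Fin N → ℂ) p‖ := fun x => hmin' x.2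
    have hδ : 0 < δ := norm_pos_iff.mpr (hcon x₀ hx₀)
    have hbdd : BddAbove ((fun x => ‖eval x p‖) '' X) :=
      (hX.image (MvPolynomial.continuous_eval (p := p)).norm).bddAbove
    set M : ℝ := sSup ((fun x => ‖eval x p‖) '' X) with hMdef
    have hM : ∀ x : X, ‖eval (x : Fin N → ℂ) p‖ ≤ M := fun x =>
      le_csSup hbdd ⟨x, x.2, rfl⟩
    have hδM : δ ≤ M := hM ⟨x₀, hx₀⟩
    obtain ⟨g, hgP, ⟨h, hhP, hgh⟩, hFg₀⟩ := hdense _ hFP (δ/3) (by positivity)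
    have hFg : ∀ x : X, ‖eval (x : Fin N → ℂ) p - g x‖ < δ/3 := fun x => hFg₀ x
    have hglb : ∀ x : X, 2*δ/3 ≤ ‖g x‖ := by
      intro x
      have h1 : δ ≤ ‖eval (x : Fin N → ℂ) p‖ := hmin x
      have h2 : ‖eval (x : Fin N → ℂ) p‖ ≤ ‖eval (x : Fin N → ℂ) p - g x‖ + ‖g x‖ := by
        simpa using norm_add_le (eval (x : Fin N → ℂ) p - g x) (g x)
      have h3 := hFg x
      linarith
    set u : ℝ := 3/(2*δ) with hudef
    have hu0 : 0 < u := by positivity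
    have hδu : δ * u = 3/2 := by rw [hudef]; field_simp
    have hhb : ∀ x : X, ‖h x‖ ≤ u := by
      intro x
      have hx : g x * h x = 1 := by
        have := congrFun (congrArg DFunLike.coe hgh) x
        simpa using this
      have h1 : ‖g x‖ * ‖h x‖ = 1 := by rw [← norm_mul, hx, norm_one]
      have h2 := hglb x
      have h3 : (0:ℝ) ≤ ‖h x‖ := norm_nonneg _
      rw [hudef, le_div_iff₀ (by positivity)]
      nlinarith [mul_le_mul_of_nonneg_right h2 h3]
    set v : ℝ := 1/(100*(M+δ+1)) with hvdef
    have hMδ1 : 0 < 100*(M+δ+1) := by nlinarith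
    have hv0 : 0 < v := by rw [hvdef]; exact div_pos one_pos hMδ1
    have hgP' : g ∈ closure (Set.range (polyCM N X)) := hgP
    have hhP' : h ∈ closure (Set.range (polyCM N X)) := hhP
    obtain ⟨-, ⟨q, rfl⟩, hq⟩ := Metric.mem_closure_iff.mp hgP' (δ/100) (by positivity)
    obtain ⟨-, ⟨r, rfl⟩, hr⟩ := Metric.mem_closure_iff.mp hhP' v hv0
    have hqx : ∀ x : X, ‖g x - eval (x : Fin N → ℂ) q‖ < δ/100 := by
      intro x
      calc ‖g x - eval (x : Fin N → ℂ) q‖ = dist (g x) (polyCM N X q x) :=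
            (dist_eq_norm _ _).symm
        _ ≤ dist g (polyCM N X q) := ContinuousMap.dist_apply_le_dist x
        _ < δ/100 := hq
    have hrx : ∀ x : X, ‖h x - eval (x : Fin N → ℂ) r‖ < v := by
      intro x
      calc ‖h x - eval (x : Fin N → ℂ) r‖ = dist (h x) (polyCM N X r x) :=
            (dist_eq_norm _ _).symm
        _ ≤ dist h (polyCM N X r) := ContinuousMap.dist_apply_le_dist x
        _ < v := hr
    have hq1 : ‖eval z q‖ ≤ δ/100 + δ/3 := by
      have key := hle (q - p) (δ/100 + δ/3) ?_
      · rwa [map_sub, hpz, sub_zero] at key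
      · intro x
        have h1 : eval (x : Fin N → ℂ) (q - p)
            = (eval (x : Fin N → ℂ) q - g x) + (g x - eval (x : Fin N → ℂ) p) := by
          rw [map_sub]; ring
        rw [h1]
        have h2 : ‖eval (x : Fin N → ℂ) q - g x‖ ≤ δ/100 := by
          rw [norm_sub_rev]; exact (hqx x).le
        have h3 : ‖g x - eval (x : Fin N → ℂ) p‖ ≤ δ/3 := by
          rw [norm_sub_rev]; exact (hFg x).le
        exact le_trans (norm_add_le _ _) (by linarith)
    have hr1 : ‖eval z r‖ ≤ u + v := by
      apply hle
      intro x
      have h2 : ‖eval (x : Fin N → ℂ) r‖ ≤ ‖eval (x : Fin N → ℂ) r - h x‖ + ‖h x‖ := by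
        simpa using norm_add_le (eval (x : Fin N → ℂ) r - h x) (h x)
      have h3 : ‖eval (x : Fin N → ℂ) r - h x‖ ≤ v := by
        rw [norm_sub_rev]; exact (hrx x).le
      have h4 := hhb x
      linarith
    have hqb : ∀ x : X, ‖eval (x : Fin N → ℂ) q‖ ≤ M + δ/3 + δ/100 := by
      intro x
      have h1 : ‖eval (x : Fin N → ℂ) q‖ ≤ ‖eval (x : Fin N → ℂ) q - g x‖ + ‖g x‖ := by
        simpa using norm_add_le (eval (x : Fin N → ℂ) q - g x) (g x)
      have h2 : ‖g x‖ ≤ ‖g x - eval (x : Fin N → ℂ) p‖ + ‖eval (x : Fin N → ℂ) p‖ := by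
        simpa using norm_add_le (g x - eval (x : Fin N → ℂ) p) (eval (x : Fin N → ℂ) p)
      have h3 : ‖eval (x : Fin N → ℂ) q - g x‖ ≤ δ/100 := by
        rw [norm_sub_rev]; exact (hqx x).le
      have h4 : ‖g x - eval (x : Fin N → ℂ) p‖ ≤ δ/3 := by
        rw [norm_sub_rev]; exact (hFg x).le
      have h5 := hM x
      linarith
    have hqr : ‖eval z (q * r) - 1‖ ≤ (M + δ/3 + δ/100) * v + (δ/100) * u := by
      have key := hle (q * r - 1) ((M + δ/3 + δ/100) * v + (δ/100) * u) ?_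
      · rwa [map_sub, map_one] at key
      · intro x
        have hx1 : g x * h x = 1 := by
          have := congrFun (congrArg DFunLike.coe hgh) x
          simpa using this
        have h1 : eval (x : Fin N → ℂ) (q * r - 1)
            = eval (x : Fin N → ℂ) q * (eval (x : Fin N → ℂ) r - h x)
              + (eval (x : Fin N → ℂ) q - g x) * h x := by
          rw [map_sub, map_mul, map_one, ← hx1]; ring
        rw [h1]
        have h2 := hqb x
        have h3 : ‖eval (x : Fin N → ℂ) r - h x‖ ≤ v := by
          rw [norm_sub_rev]; exact (hrx x).le
        have h4 : ‖eval (x : Fin N → ℂ) q - g x‖ ≤ δ/100 := by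
          rw [norm_sub_rev]; exact (hqx x).le
        have h5 := hhb x
        refine le_trans (norm_add_le _ _) ?_
        rw [norm_mul, norm_mul]
        have e1 : ‖eval (x : Fin N → ℂ) q‖ * ‖eval (x : Fin N → ℂ) r - h x‖
            ≤ (M + δ/3 + δ/100) * v :=
          mul_le_mul h2 h3 (norm_nonneg _) (by nlinarith)
        have e2 : ‖eval (x : Fin N → ℂ) q - g x‖ * ‖h x‖ ≤ (δ/100) * u :=
          mul_le_mul h4 h5 (norm_nonneg _) (by positivity)
        linarith
    have key : (1:ℝ) ≤ (δ/100 + δ/3) * (u + v) + ((M + δ/3 + δ/100) * v + (δ/100) * u) := by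
      have h2 : (1:ℝ) ≤ ‖eval z (q*r)‖ + ‖eval z (q*r) - 1‖ := by
        calc (1:ℝ) = ‖(1:ℂ)‖ := by simp
          _ = ‖eval z (q*r) + (1 - eval z (q*r))‖ := by ring_nf
          _ ≤ ‖eval z (q*r)‖ + ‖1 - eval z (q*r)‖ := norm_add_le _ _
          _ = ‖eval z (q*r)‖ + ‖eval z (q*r) - 1‖ := by rw [norm_sub_rev]
      have h3 : ‖eval z (q*r)‖ ≤ (δ/100 + δ/3) * (u + v) := by
        rw [map_mul, norm_mul]
        exact mul_le_mul hq1 hr1 (norm_nonneg _) (by positivity)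
      linarith
    have hvM : v * (100*(M + δ + 1)) = 1 := by
      rw [hvdef]; field_simp; exact div_self (ne_of_gt (by linarith))
    nlinarith [key, hδu, hvM, mul_le_mul_of_nonneg_right hδM hv0.le,
      mul_nonneg hδ.le hv0.le, hv0, hδ, mul_pos hu0 hv0]
  · -- easy direction
    intro hz p
    have h0 : eval z (p - C (eval z p)) = 0 := by
      rw [map_sub, eval_C, sub_self]
    obtain ⟨x, hxX, hxq⟩ := hz _ h0
    rw [map_sub, eval_C, sub_eq_zero] at hxq
    have hbdd : BddAbove ((fun x => ‖eval x p‖) '' X) :=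
      (hX.image (MvPolynomial.continuous_eval (p := p)).norm).bddAbove
    refine le_csSup hbdd ⟨x, hxX, ?_⟩
    show ‖eval x p‖ = ‖eval z p‖
    rw [hxq]
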